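/- On the open set Ω = {(b,c,d) ∈ ℝ³ : b < c < d}, let χ(b,c,d) := (d−c)/(d−b) ∈ (0,1) and define m(b,c,d) := (d−c)^{−1/2}·χ(b,c,d)^{−1/2}·B(χ(b,c,d)). Then m is twice continuously differentiable on Ω and satisfies the partial differential equation −(1/(d−b)²)·m + (2/(c−b))·∂m/∂c + (2/(d−b))·∂m/∂d − (8/3)·(1/(b−c))·∂m/∂b + (8/3)·∂²m/∂b² = 0 at every point of Ω. -/

import Mathlib

/-- `B(χ) := ∫_{1−χ}^1 ζ^{1/2} (ζ−1+χ)^{−1/4} (1−ζ)^{−1/4} dζ`. -/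
noncomputable def Bint (χ : ℝ) : ℝ :=
  ∫ ζ in (1 - χ)..1, ζ ^ ((1/2) : ℝ) * (ζ - 1 + χ) ^ (-(1/4) : ℝ) * (1 - ζ) ^ (-(1/4) : ℝ)

/-- m(b,c,d) = (d-c)^(-1/2) chi^(-1/2) B(chi) with chi = (d-c)/(d-b). -/
noncomputable def mB (b c d : ℝ) : ℝ :=
  (d - c) ^ (-(1/2) : ℝ) * ((d - c) / (d - b)) ^ (-(1/2) : ℝ) * Bint ((d - c) / (d - b))

section SLEaux

open MeasureTheory intervalIntegral Real Set
open scoped Interval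

noncomputable def wgt (s : ℝ) : ℝ := s ^ (-(1/4) : ℝ) * (1 - s) ^ (-(1/4) : ℝ)

lemma wgt_meas : Measurable wgt := by
  have h1 : Measurable fun s : ℝ => s ^ (-(1/4) : ℝ) := by measurability
  exact h1.mul (h1.comp (measurable_const.sub measurable_id))

lemma wgt_nonneg (s : ℝ) (h : 0 ≤ s) (h1 : s ≤ 1) : 0 ≤ wgt s :=
  mul_nonneg (Real.rpow_nonneg h _) (Real.rpow_nonneg (by linarith) _)

lemma wgt_le (s : ℝ) (hs : 0 < s) (hs1 : s ≤ 1) :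
    wgt s ≤ s ^ (-(1/2) : ℝ) + (1 - s) ^ (-(1/2) : ℝ) := by
  rcases eq_or_lt_of_le hs1 with rfl | hs1
  · have : wgt 1 = 0 := by simp [wgt, Real.zero_rpow (by norm_num : -(1/4:ℝ) ≠ 0)]
    rw [this]
    positivity
  rcases le_or_gt s (1 - s) with h | h
  · have h1 : (1 - s) ^ (-(1/4) : ℝ) ≤ s ^ (-(1/4) : ℝ) :=
      Real.rpow_le_rpow_of_nonpos hs h (by norm_num)
    have h2 : wgt s ≤ s ^ (-(1/4) : ℝ) * s ^ (-(1/4) : ℝ) := by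
      unfold wgt
      exact mul_le_mul_of_nonneg_left h1 (Real.rpow_nonneg hs.le _)
    rw [← Real.rpow_add hs] at h2
    calc wgt s ≤ s ^ (-(1/2) : ℝ) := by norm_num at h2 ⊢; linarith
      _ ≤ _ := le_add_of_nonneg_right (Real.rpow_nonneg (by linarith) _)
  · have hs1' : 0 < 1 - s := by linarith
    have h1 : s ^ (-(1/4) : ℝ) ≤ (1 - s) ^ (-(1/4) : ℝ) :=
      Real.rpow_le_rpow_of_nonpos hs1' h.le (by norm_num)
    have h2 : wgt s ≤ (1 - s) ^ (-(1/4) : ℝ) * (1 - s) ^ (-(1/4) : ℝ) := by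
      unfold wgt
      exact mul_le_mul_of_nonneg_right h1 (Real.rpow_nonneg hs1'.le _)
    rw [← Real.rpow_add hs1'] at h2
    calc wgt s ≤ (1 - s) ^ (-(1/2) : ℝ) := by norm_num at h2 ⊢; linarith
      _ ≤ _ := le_add_of_nonneg_left (Real.rpow_nonneg hs.le _)

lemma wgt_intble : IntervalIntegrable wgt volume 0 1 := by
  have hg : IntervalIntegrable (fun s : ℝ => s ^ (-(1/2) : ℝ) + (1 - s) ^ (-(1/2) : ℝ))
      volume 0 1 := by
    refine (intervalIntegral.intervalIntegrable_rpow' (by norm_num)).add ?_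
    have := ((intervalIntegral.intervalIntegrable_rpow'
      (a := 0) (b := 1) (r := -(1/2)) (by norm_num)).comp_sub_left 1).symm
    simpa using this
  refine hg.mono_fun' wgt_meas.aestronglyMeasurable ?_
  filter_upwards [ae_restrict_mem measurableSet_uIoc] with s hs
  rw [uIoc_of_le (by norm_num : (0:ℝ) ≤ 1)] at hs
  rw [Real.norm_eq_abs, abs_of_nonneg (wgt_nonneg s hs.1.le hs.2)]
  exact wgt_le s hs.1 hs.2

lemma rpow_const_meas (p : ℝ) : Measurable fun x : ℝ => x ^ p := by measurability

noncomputable def Ih (g : ℝ → ℝ) (p : ℝ) (χ : ℝ) : ℝ :=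
  ∫ s in (0:ℝ)..1, g s * (1 - χ * s) ^ p * wgt s

lemma integrand_meas (g : ℝ → ℝ) (hg : Continuous g) (p χ : ℝ) :
    AEStronglyMeasurable (fun s => g s * (1 - χ * s) ^ p * wgt s)
      (volume.restrict (Ι (0:ℝ) 1)) := by
  exact ((hg.measurable.mul ((rpow_const_meas p).comp
    (measurable_const.sub (measurable_id.const_mul χ)))).mul wgt_meas).aestronglyMeasurable

lemma rpow_bound {t δ M p : ℝ} (hδ : 0 < δ) (h1 : δ ≤ t) (h2 : t ≤ M) :
    |t ^ p| ≤ δ ^ p + M ^ p := by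
  have ht : 0 < t := lt_of_lt_of_le hδ h1
  rw [abs_of_nonneg (Real.rpow_nonneg ht.le p)]
  rcases le_or_gt 0 p with hp | hp
  · calc t ^ p ≤ M ^ p := Real.rpow_le_rpow ht.le h2 hp
      _ ≤ _ := le_add_of_nonneg_left (Real.rpow_nonneg hδ.le _)
  · calc t ^ p ≤ δ ^ p := Real.rpow_le_rpow_of_nonpos hδ h1 hp.le
      _ ≤ _ := le_add_of_nonneg_right (Real.rpow_nonneg (by linarith) _)

lemma one_sub_bounds {χ₀ χ s : ℝ} (h0 : χ₀ ∈ Ioo (0:ℝ) 1)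
    (hχ : χ ∈ Metric.ball χ₀ ((1 - χ₀)/2)) (hs : s ∈ Ι (0:ℝ) 1) :
    (1 - χ₀)/2 ≤ 1 - χ * s ∧ 1 - χ * s ≤ 2 := by
  rw [uIoc_of_le (by norm_num : (0:ℝ) ≤ 1)] at hs
  rw [Metric.mem_ball, Real.dist_eq, abs_lt] at hχ
  obtain ⟨hs0, hs1⟩ := hs
  obtain ⟨h0a, h0b⟩ := h0
  constructor
  · rcases le_or_gt 0 χ with hc | hc
    · nlinarith
    · nlinarith
  · rcases le_or_gt 0 χ with hc | hc
    · nlinarith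
    · nlinarith

lemma Ih_intble (g : ℝ → ℝ) (hg : Continuous g) (p : ℝ) {χ : ℝ} (hχ : χ < 1) :
    IntervalIntegrable (fun s => g s * (1 - χ * s) ^ p * wgt s) volume 0 1 := by
  obtain ⟨C, hC⟩ := (isCompact_Icc (a := (0:ℝ)) (b := 1)).exists_bound_of_continuousOn
    hg.continuousOn
  set δ : ℝ := min (1 - χ) 1 with hδdef
  have hδ : 0 < δ := lt_min (by linarith) one_pos
  set M : ℝ := max (1 - χ) 1 with hMdef
  set K : ℝ := |C| * (δ ^ p + M ^ p) with hK
  refine ((wgt_intble.const_mul K).mono_fun'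
    (integrand_meas g hg p χ) ?_)
  filter_upwards [ae_restrict_mem measurableSet_uIoc] with s hs
  have hs' := hs
  rw [uIoc_of_le (by norm_num : (0:ℝ) ≤ 1)] at hs'
  have hb : δ ≤ 1 - χ * s ∧ 1 - χ * s ≤ M := by
    have e1 : δ ≤ 1 - χ := min_le_left _ _
    have e2 : δ ≤ 1 := min_le_right _ _
    have e3 : 1 - χ ≤ M := le_max_left _ _
    have e4 : (1:ℝ) ≤ M := le_max_right _ _
    rcases le_or_gt 0 χ with hc | hc
    · have : χ * s ≤ χ := by nlinarith [hs'.1.le, hs'.2]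
      have h0s : 0 ≤ χ * s := mul_nonneg hc hs'.1.le
      exact ⟨by linarith, by linarith⟩
    · have : χ * s ≤ 0 := mul_nonpos_of_nonpos_of_nonneg hc.le hs'.1.le
      have : χ ≤ χ * s := by nlinarith [hs'.1.le, hs'.2]
      exact ⟨by linarith, by linarith⟩
  have h1 : |g s| ≤ |C| := (hC s ⟨hs'.1.le, hs'.2⟩).trans (le_abs_self C)
  have h2 : |(1 - χ * s) ^ p| ≤ δ ^ p + M ^ p := rpow_bound hδ hb.1 hb.2
  have hwnn : 0 ≤ wgt s := wgt_nonneg s hs'.1.le hs'.2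
  calc ‖g s * (1 - χ * s) ^ p * wgt s‖
      = |g s| * |(1 - χ * s) ^ p| * wgt s := by
        rw [Real.norm_eq_abs, abs_mul, abs_mul, abs_of_nonneg hwnn]
    _ ≤ |C| * (δ ^ p + M ^ p) * wgt s := by
        apply mul_le_mul_of_nonneg_right _ hwnn
        exact mul_le_mul h1 h2 (abs_nonneg _) (abs_nonneg _)
    _ = K * wgt s := rfl

lemma Ih_hasDerivAt (g : ℝ → ℝ) (hg : Continuous g) (p : ℝ) {χ₀ : ℝ}
    (h0 : χ₀ ∈ Ioo (0:ℝ) 1) :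
    HasDerivAt (Ih g p) (Ih (fun s => -p * s * g s) (p - 1) χ₀) χ₀ := by
  obtain ⟨C, hC⟩ := (isCompact_Icc (a := (0:ℝ)) (b := 1)).exists_bound_of_continuousOn
    (continuous_id.mul hg).continuousOn
  set δ : ℝ := (1 - χ₀)/2 with hδdef
  have hδ : 0 < δ := by simp only [hδdef]; linarith [h0.2]
  set K : ℝ := (|p| * |C|) * (δ ^ (p-1) + 2 ^ (p-1)) with hK
  have key := intervalIntegral.hasDerivAt_integral_of_dominated_loc_of_deriv_le
    (F := fun χ s => g s * (1 - χ * s) ^ p * wgt s)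
    (F' := fun χ s => (-p * s * g s) * (1 - χ * s) ^ (p-1) * wgt s)
    (bound := fun s => K * wgt s) (a := 0) (b := 1) (μ := volume) (x₀ := χ₀)
    (s := Metric.ball χ₀ δ) (Metric.ball_mem_nhds χ₀ hδ)
    (Filter.Eventually.of_forall fun χ => integrand_meas g hg p χ)
    (Ih_intble g hg p h0.2)
    (integrand_meas _ (by continuity) (p-1) χ₀)
    ?_ ((wgt_intble.const_mul K)) ?_
  · exact key.2
  · -- bound
    filter_upwards [] with s
    intro hs χ hχ
    have hb := one_sub_bounds h0 hχ hs
    rw [uIoc_of_le (by norm_num : (0:ℝ) ≤ 1)] at hs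
    have hwnn : 0 ≤ wgt s := wgt_nonneg s hs.1.le hs.2
    have h1 : |s * g s| ≤ |C| := (hC s ⟨hs.1.le, hs.2⟩).trans (le_abs_self C)
    have h2 : |(1 - χ * s) ^ (p-1)| ≤ δ ^ (p-1) + 2 ^ (p-1) := rpow_bound hδ hb.1 hb.2
    calc ‖(-p * s * g s) * (1 - χ * s) ^ (p-1) * wgt s‖
        = (|p| * |s * g s|) * |(1 - χ * s) ^ (p-1)| * wgt s := by
          rw [Real.norm_eq_abs, abs_mul, abs_mul, abs_of_nonneg hwnn]
          congr 2
          rw [show -p * s * g s = -p * (s * g s) by ring, abs_mul, abs_neg]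
      _ ≤ (|p| * |C|) * (δ ^ (p-1) + 2 ^ (p-1)) * wgt s := by
          apply mul_le_mul_of_nonneg_right _ hwnn
          exact mul_le_mul (mul_le_mul_of_nonneg_left h1 (abs_nonneg p)) h2
            (abs_nonneg _) (by positivity)
      _ = K * wgt s := rfl
  · -- differentiability
    filter_upwards [] with s
    intro hs χ hχ
    have hb := one_sub_bounds h0 hχ hs
    have hne : 1 - χ * s ≠ 0 := by linarith [hb.1, hδ]
    have hinner : HasDerivAt (fun χ : ℝ => 1 - χ * s) (-s) χ := by
      simpa using ((hasDerivAt_id χ).mul_const s).const_sub 1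
    have h3 := hinner.rpow_const (p := p) (Or.inl hne)
    have := (h3.const_mul (g s)).mul_const (wgt s)
    refine this.congr_deriv ?_
    ring

noncomputable def F0 (χ : ℝ) : ℝ := Ih (fun _ => 1) (1/2) χ

noncomputable def F1 (χ : ℝ) : ℝ := Ih (fun s => -(1/2) * s) (-(1/2)) χ

noncomputable def F2 (χ : ℝ) : ℝ := Ih (fun s => -(1/4) * s^2) (-(3/2)) χ
noncomputable def F3 (χ : ℝ) : ℝ := Ih (fun s => -(3/8) * s^3) (-(5/2)) χ

lemma Ih_const_mul (c : ℝ) (g : ℝ → ℝ) (p χ : ℝ) :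
    c * Ih g p χ = ∫ s in (0:ℝ)..1, (c * g s) * (1 - χ * s) ^ p * wgt s := by
  rw [Ih, ← intervalIntegral.integral_const_mul]
  congr 1
  funext s
  ring

lemma ode {χ : ℝ} (h : χ ∈ Ioo (0:ℝ) 1) :
    χ * (1 - χ) * F2 χ + (3/2 - 5/4 * χ) * F1 χ + 3/8 * F0 χ = 0 := by
  obtain ⟨h0, h1⟩ := h
  -- the three integrands (with constants pulled in)
  set f2 : ℝ → ℝ := fun s => (χ * (1 - χ) * (-(1/4) * s^2)) * (1 - χ * s) ^ (-(3/2) : ℝ) * wgt s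
  set f1 : ℝ → ℝ := fun s => ((3/2 - 5/4 * χ) * (-(1/2) * s)) * (1 - χ * s) ^ (-(1/2) : ℝ) * wgt s
  set f0 : ℝ → ℝ := fun s => (3/8 * 1) * (1 - χ * s) ^ ((1/2) : ℝ) * wgt s
  have i2 : IntervalIntegrable f2 volume 0 1 :=
    Ih_intble _ (by continuity) _ h1
  have i1 : IntervalIntegrable f1 volume 0 1 :=
    Ih_intble _ (by continuity) _ h1
  have i0 : IntervalIntegrable f0 volume 0 1 :=
    Ih_intble _ (by continuity) _ h1
  have hLHS : χ * (1 - χ) * F2 χ + (3/2 - 5/4 * χ) * F1 χ + 3/8 * F0 χ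
      = ∫ s in (0:ℝ)..1, (f2 s + f1 s + f0 s) := by
    rw [F2, F1, F0, Ih_const_mul, Ih_const_mul, Ih_const_mul,
      intervalIntegral.integral_add (i2.add i1) i0,
      intervalIntegral.integral_add i2 i1]
  rw [hLHS]
  -- the antiderivative
  set H : ℝ → ℝ := fun x =>
    1/2 * (x ^ ((3:ℝ)/4) * (1 - x) ^ ((3:ℝ)/4) * (1 - χ * x) ^ (-(1/2) : ℝ)) with hH
  have hcs : ∀ x : ℝ, x ∈ Icc (0:ℝ) 1 → 0 < 1 - χ * x := by
    intro x hx
    nlinarith [hx.1, hx.2]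
  have hcont : ContinuousOn H (Icc 0 1) := by
    apply ContinuousOn.mul continuousOn_const
    apply ContinuousOn.mul
    apply ContinuousOn.mul
    · exact continuousOn_id.rpow_const (fun x _ => Or.inr (by norm_num))
    · exact (continuousOn_const.sub continuousOn_id).rpow_const
        (fun x _ => Or.inr (by norm_num))
    · exact (continuousOn_const.sub
        ((continuous_const.mul continuous_id).continuousOn)).rpow_const
        (fun x hx => Or.inl (hcs x hx).ne')
  have hderiv : ∀ s ∈ Ioo (0:ℝ) 1, HasDerivAt H (f2 s + f1 s + f0 s) s := by
    intro s hs
    obtain ⟨hs0, hs1⟩ := hs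
    have hc : 0 < 1 - χ * s := hcs s ⟨hs0.le, hs1.le⟩
    have h1s : 0 < 1 - s := by linarith
    have d1 : HasDerivAt (fun x : ℝ => x ^ ((3:ℝ)/4)) ((3:ℝ)/4 * s ^ ((3:ℝ)/4 - 1)) s :=
      Real.hasDerivAt_rpow_const (Or.inl hs0.ne')
    have inner2 : HasDerivAt (fun x : ℝ => 1 - x) (-1) s := by
      simpa using (hasDerivAt_id s).const_sub 1
    have d2 := inner2.rpow_const (p := (3:ℝ)/4) (Or.inl h1s.ne')
    have inner3 : HasDerivAt (fun x : ℝ => 1 - χ * x) (-χ) s := by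
      simpa using ((hasDerivAt_id s).const_mul χ).const_sub 1
    have d3 := inner3.rpow_const (p := (-(1/2) : ℝ)) (Or.inl hc.ne')
    have dH := (((d1.mul d2).mul d3).const_mul (1/2 : ℝ))
    convert (show HasDerivAt H _ s from dH) using 1
    -- now the algebraic identity
    have e1 : s ^ ((3:ℝ)/4) = s * s ^ (-(1/4) : ℝ) := by
      rw [show ((3:ℝ)/4) = 1 + -(1/4) by norm_num, Real.rpow_add hs0, Real.rpow_one]
    have e1' : s ^ ((3:ℝ)/4 - 1) = s ^ (-(1/4) : ℝ) := by norm_num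
    have e2 : (1 - s) ^ ((3:ℝ)/4) = (1 - s) * (1 - s) ^ (-(1/4) : ℝ) := by
      rw [show ((3:ℝ)/4) = 1 + -(1/4) by norm_num, Real.rpow_add h1s, Real.rpow_one]
    have e2' : (1 - s) ^ ((3:ℝ)/4 - 1) = (1 - s) ^ (-(1/4) : ℝ) := by norm_num
    have e3 : (1 - χ * s) ^ (-(1/2) : ℝ) = (1 - χ * s) * (1 - χ * s) ^ (-(3/2) : ℝ) := by
      rw [show (-(1/2) : ℝ) = 1 + -(3/2) by norm_num, Real.rpow_add hc, Real.rpow_one]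
    have e3' : (1 - χ * s) ^ (-(1/2) - 1 : ℝ) = (1 - χ * s) ^ (-(3/2) : ℝ) := by norm_num
    have e4 : (1 - χ * s) ^ ((1/2) : ℝ)
        = (1 - χ * s) * ((1 - χ * s) * (1 - χ * s) ^ (-(3/2) : ℝ)) := by
      rw [show ((1/2) : ℝ) = 1 + (1 + -(3/2)) by norm_num, Real.rpow_add hc,
        Real.rpow_add hc, Real.rpow_one]
    simp only [f2, f1, f0, wgt, e1', e2', e3', Pi.mul_apply]
    rw [e4, e3, e1, e2]
    ring
  have hzero : (∫ s in (0:ℝ)..1, (f2 s + f1 s + f0 s)) = H 1 - H 0 :=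
    intervalIntegral.integral_eq_sub_of_hasDeriv_right_of_le (by norm_num) hcont
      (fun x hx => (hderiv x hx).hasDerivWithinAt) ((i2.add i1).add i0)
  rw [hzero, hH]
  norm_num [Real.zero_rpow]

lemma Bint_eq {χ : ℝ} (h : χ ∈ Ioo (0:ℝ) 1) : Bint χ = χ ^ ((1/2) : ℝ) * F0 χ := by
  obtain ⟨h0, h1⟩ := h
  set f : ℝ → ℝ := fun ζ =>
    ζ ^ ((1/2) : ℝ) * (ζ - 1 + χ) ^ (-(1/4) : ℝ) * (1 - ζ) ^ (-(1/4) : ℝ) with hf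
  have step1 : (∫ x in (0:ℝ)..1, f (χ * x + (1 - χ))) = χ⁻¹ • Bint χ := by
    have := intervalIntegral.integral_comp_mul_add (a := (0:ℝ)) (b := 1) f h0.ne' (1 - χ)
    rw [this]
    norm_num [Bint]
    exact Or.inl rfl
  have step1' : Bint χ = χ * ∫ x in (0:ℝ)..1, f (χ * x + (1 - χ)) := by
    rw [step1, smul_eq_mul, ← mul_assoc, mul_inv_cancel₀ h0.ne', one_mul]
  have step2 : (∫ x in (0:ℝ)..1, f (χ * x + (1 - χ)))
      = ∫ x in (0:ℝ)..1, f (χ * (1 - x) + (1 - χ)) := by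
    have := intervalIntegral.integral_comp_sub_left (a := (0:ℝ)) (b := 1)
      (fun x => f (χ * x + (1 - χ))) 1
    simp at this
    rw [← this]
  have step3 : ∀ x ∈ uIcc (0:ℝ) 1,
      f (χ * (1 - x) + (1 - χ)) = χ ^ (-(1/2) : ℝ) * ((1 - χ * x) ^ ((1/2):ℝ) * wgt x) := by
    intro x hx
    rw [uIcc_of_le (by norm_num : (0:ℝ) ≤ 1)] at hx
    obtain ⟨hx0, hx1⟩ := hx
    have key : χ * (1 - x) + (1 - χ) = 1 - χ * x := by ring
    rw [hf]
    simp only [key]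
    have k1 : 1 - χ * x - 1 + χ = χ * (1 - x) := by ring
    have k2 : 1 - (1 - χ * x) = χ * x := by ring
    rw [k1, k2, Real.mul_rpow h0.le (by linarith), Real.mul_rpow h0.le hx0, wgt]
    rw [show (1 - χ * x) ^ ((1/2):ℝ) * (x ^ (-(1/4):ℝ) * (1 - x) ^ (-(1/4):ℝ))
      = (1 - χ * x) ^ ((1/2):ℝ) * x ^ (-(1/4):ℝ) * (1 - x) ^ (-(1/4):ℝ) by ring]
    rw [show χ ^ (-(1/2):ℝ) = χ ^ (-(1/4):ℝ) * χ ^ (-(1/4):ℝ) by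
      rw [← Real.rpow_add h0]; norm_num]
    ring
  have step4 : (∫ x in (0:ℝ)..1, f (χ * (1 - x) + (1 - χ)))
      = χ ^ (-(1/2) : ℝ) * F0 χ := by
    rw [intervalIntegral.integral_congr step3, intervalIntegral.integral_const_mul]
    congr 1
    rw [F0, Ih]
    congr 1
    funext s
    ring
  rw [step1', step2, step4, ← mul_assoc]
  congr 1
  rw [show χ * χ ^ (-(1/2):ℝ) = χ ^ ((1:ℝ)) * χ ^ (-(1/2):ℝ) by rw [Real.rpow_one],
    ← Real.rpow_add h0]
  norm_num

lemma dF0 {χ₀ : ℝ} (h : χ₀ ∈ Ioo (0:ℝ) 1) : HasDerivAt F0 (F1 χ₀) χ₀ := by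
  have := Ih_hasDerivAt (fun _ => 1) continuous_const (1/2) h
  have e : Ih (fun s => -(1/2) * s * 1) (1/2 - 1) χ₀ = F1 χ₀ := by
    rw [F1]
    congr 1
    · funext s; ring
    · norm_num
  rw [e] at this
  exact this

lemma dF1 {χ₀ : ℝ} (h : χ₀ ∈ Ioo (0:ℝ) 1) : HasDerivAt F1 (F2 χ₀) χ₀ := by
  have := Ih_hasDerivAt (fun s => -(1/2) * s) (by continuity) (-(1/2)) h
  have e : Ih (fun s => -(-(1/2)) * s * (-(1/2) * s)) (-(1/2) - 1) χ₀ = F2 χ₀ := by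
    rw [F2]
    congr 1
    · funext s; ring
    · norm_num
  rw [e] at this
  exact this

lemma dF2 {χ₀ : ℝ} (h : χ₀ ∈ Ioo (0:ℝ) 1) : HasDerivAt F2 (F3 χ₀) χ₀ := by
  have := Ih_hasDerivAt (fun s => -(1/4) * s^2) (by continuity) (-(3/2)) h
  have e : Ih (fun s => -(-(3/2)) * s * (-(1/4) * s^2)) (-(3/2) - 1) χ₀ = F3 χ₀ := by
    rw [F3]
    congr 1
    · funext s; ring
    · norm_num
  rw [e] at this
  exact this

lemma F0_contDiffOn : ContDiffOn ℝ 2 F0 (Ioo (0:ℝ) 1) := by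
  have h2 : (2 : WithTop ℕ∞) = 1 + 1 := by norm_num
  rw [h2, contDiffOn_succ_iff_deriv_of_isOpen isOpen_Ioo]
  refine ⟨fun x hx => (dF0 hx).differentiableAt.differentiableWithinAt, by simp, ?_⟩
  have hd0 : ∀ x ∈ Ioo (0:ℝ) 1, F1 x = deriv F0 x := fun x hx => ((dF0 hx).deriv).symm
  refine ContDiffOn.congr ?_ fun x hx => (hd0 x hx).symm
  have h1 : (1 : WithTop ℕ∞) = 0 + 1 := by norm_num
  rw [h1, contDiffOn_succ_iff_deriv_of_isOpen isOpen_Ioo]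
  refine ⟨fun x hx => (dF1 hx).differentiableAt.differentiableWithinAt, by simp, ?_⟩
  have hd1 : ∀ x ∈ Ioo (0:ℝ) 1, F2 x = deriv F1 x := fun x hx => ((dF1 hx).deriv).symm
  refine ContDiffOn.congr ?_ fun x hx => (hd1 x hx).symm
  rw [contDiffOn_zero]
  exact fun x hx => (dF2 hx).continuousAt.continuousWithinAt

lemma chi_mem {b c d : ℝ} (h1 : b < c) (h2 : c < d) : (d - c)/(d - b) ∈ Ioo (0:ℝ) 1 :=
  ⟨div_pos (by linarith) (by linarith), (div_lt_one (by linarith)).2 (by linarith)⟩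

lemma mB_eq {b c d : ℝ} (h1 : b < c) (h2 : c < d) :
    mB b c d = (d - c) ^ (-(1/2) : ℝ) * F0 ((d - c)/(d - b)) := by
  have hχ := chi_mem h1 h2
  have key : ((d - c)/(d - b)) ^ (-(1/2) : ℝ) * (((d - c)/(d - b)) ^ ((1/2) : ℝ)
      * F0 ((d - c)/(d - b))) = F0 ((d - c)/(d - b)) := by
    rw [← mul_assoc, ← Real.rpow_add hχ.1]
    norm_num
  rw [mB, Bint_eq hχ, mul_assoc, key]

lemma mB_contDiffOn :
    ContDiffOn ℝ 2 (fun p : ℝ × ℝ × ℝ => mB p.1 p.2.1 p.2.2)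
      {p : ℝ × ℝ × ℝ | p.1 < p.2.1 ∧ p.2.1 < p.2.2} := by
  have hnice : ContDiffOn ℝ 2
      (fun p : ℝ × ℝ × ℝ => (p.2.2 - p.2.1) ^ (-(1/2) : ℝ)
        * F0 ((p.2.2 - p.2.1)/(p.2.2 - p.1)))
      {p : ℝ × ℝ × ℝ | p.1 < p.2.1 ∧ p.2.1 < p.2.2} := by
    intro p hp
    obtain ⟨hp1, hp2⟩ := hp
    apply ContDiffAt.contDiffWithinAt
    have hdc : p.2.2 - p.2.1 ≠ 0 := sub_ne_zero.2 hp2.ne'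
    have hdb : p.2.2 - p.1 ≠ 0 := sub_ne_zero.2 (by linarith : p.1 < p.2.2).ne'
    have c1 : ContDiffAt ℝ 2 (fun q : ℝ × ℝ × ℝ => (q.2.2 - q.2.1) ^ (-(1/2) : ℝ)) p :=
      (Real.contDiffAt_rpow_const_of_ne hdc).comp p
        ((contDiff_snd.snd.sub contDiff_snd.fst).contDiffAt)
    have cχ : ContDiffAt ℝ 2 (fun q : ℝ × ℝ × ℝ => (q.2.2 - q.2.1)/(q.2.2 - q.1)) p :=
      ((contDiff_snd.snd.sub contDiff_snd.fst).contDiffAt).div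
        ((contDiff_snd.snd.sub contDiff_fst).contDiffAt) hdb
    have c2 : ContDiffAt ℝ 2 (fun q : ℝ × ℝ × ℝ =>
        F0 ((q.2.2 - q.2.1)/(q.2.2 - q.1))) p :=
      (F0_contDiffOn.contDiffAt (Ioo_mem_nhds (chi_mem hp1 hp2).1 (chi_mem hp1 hp2).2)).comp p cχ
    exact c1.mul c2
  exact hnice.congr fun p hp => mB_eq hp.1 hp.2

lemma pde (b c d : ℝ) (h1 : b < c) (h2 : c < d) :
    -(1 / (d - b) ^ 2) * mB b c d
      + (2 / (c - b)) * deriv (fun t => mB b t d) c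
      + (2 / (d - b)) * deriv (fun t => mB b c t) d
      - (8 / 3) * (1 / (b - c)) * deriv (fun t => mB t c d) b
      + (8 / 3) * deriv (deriv (fun t => mB t c d)) b = 0 := by
  have hbd : b < d := h1.trans h2
  have hdb : (0:ℝ) < d - b := by linarith
  have hdc : (0:ℝ) < d - c := by linarith
  have hcb : (0:ℝ) < c - b := by linarith
  have hχ : (d - c)/(d - b) ∈ Ioo (0:ℝ) 1 := chi_mem h1 h2
  have rP : (d - c) ^ (-(1/2) - 1 : ℝ) = (d - c) ^ (-(1/2) : ℝ) / (d - c) := by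
    rw [show (-(1/2) - 1 : ℝ) = -(1/2) - (1:ℝ) from rfl, Real.rpow_sub hdc, Real.rpow_one]
  -- ∂/∂c
  have hin_c : HasDerivAt (fun t : ℝ => (d - t) / (d - b)) (-1 / (d - b)) c :=
    ((hasDerivAt_id c).const_sub d).div_const (d - b)
  have hF0c : HasDerivAt (fun t : ℝ => F0 ((d - t) / (d - b)))
      (F1 ((d - c)/(d - b)) * (-1 / (d - b))) c := (dF0 hχ).comp c hin_c
  have u1c : HasDerivAt (fun t : ℝ => (d - t) ^ (-(1/2) : ℝ))
      (-1 * (-(1/2)) * (d - c) ^ (-(1/2) - 1 : ℝ)) c :=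
    ((hasDerivAt_id c).const_sub d).rpow_const (Or.inl hdc.ne')
  have hev_c : (fun t => mB b t d) =ᶠ[nhds c]
      (fun t => (d - t) ^ (-(1/2) : ℝ) * F0 ((d - t) / (d - b))) := by
    filter_upwards [Ioo_mem_nhds h1 h2] with t ht
    exact mB_eq ht.1 ht.2
  have Dc : deriv (fun t => mB b t d) c
      = -1 * (-(1/2)) * (d - c) ^ (-(1/2) - 1 : ℝ) * F0 ((d - c)/(d - b))
        + (d - c) ^ (-(1/2) : ℝ) * (F1 ((d - c)/(d - b)) * (-1 / (d - b))) := by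
    rw [Filter.EventuallyEq.deriv_eq hev_c]
    exact (u1c.mul hF0c).deriv
  -- ∂/∂d
  have hin_d : HasDerivAt (fun t : ℝ => (t - c) / (t - b))
      ((1 * (d - b) - (d - c) * 1) / (d - b) ^ 2) d :=
    ((hasDerivAt_id d).sub_const c).div ((hasDerivAt_id d).sub_const b) (sub_ne_zero.2 hbd.ne')
  have hF0d : HasDerivAt (fun t : ℝ => F0 ((t - c) / (t - b)))
      (F1 ((d - c)/(d - b)) * ((1 * (d - b) - (d - c) * 1) / (d - b) ^ 2)) d :=
    (dF0 hχ).comp d hin_d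
  have u1d : HasDerivAt (fun t : ℝ => (t - c) ^ (-(1/2) : ℝ))
      (1 * (-(1/2)) * (d - c) ^ (-(1/2) - 1 : ℝ)) d := by
    have := ((hasDerivAt_id d).sub_const c).rpow_const (p := (-(1/2) : ℝ)) (Or.inl hdc.ne')
    simpa using this
  have hev_d : (fun t => mB b c t) =ᶠ[nhds d]
      (fun t => (t - c) ^ (-(1/2) : ℝ) * F0 ((t - c) / (t - b))) := by
    filter_upwards [Ioi_mem_nhds h2] with t ht
    exact mB_eq h1 ht
  have Dd : deriv (fun t => mB b c t) d
      = 1 * (-(1/2)) * (d - c) ^ (-(1/2) - 1 : ℝ) * F0 ((d - c)/(d - b))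
        + (d - c) ^ (-(1/2) : ℝ)
          * (F1 ((d - c)/(d - b)) * ((1 * (d - b) - (d - c) * 1) / (d - b) ^ 2)) := by
    rw [Filter.EventuallyEq.deriv_eq hev_d]
    exact (u1d.mul hF0d).deriv
  -- ∂/∂b and ∂²/∂b²
  set vb : ℝ → ℝ := fun t =>
    (d - c) ^ (-(1/2) : ℝ) * (F1 ((d - c)/(d - t)) * ((d - c) / (d - t) ^ 2)) with hvb
  have hDb : ∀ t ∈ Iio c, HasDerivAt (fun x => mB x c d) (vb t) t := by
    intro t ht
    have htc : t < c := ht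
    have hdt : (0:ℝ) < d - t := by linarith
    have hχt : (d - c)/(d - t) ∈ Ioo (0:ℝ) 1 := chi_mem htc h2
    have hin : HasDerivAt (fun x : ℝ => (d - c) / (d - x))
        ((0 * (d - t) - (d - c) * (0 - 1)) / (d - t) ^ 2) t := by
      have := (hasDerivAt_const t (d - c)).div
        ((hasDerivAt_const t d).sub (hasDerivAt_id t)) (show d - id t ≠ 0 from hdt.ne')
      exact this
    have hcomp := ((dF0 hχt).comp t hin).const_mul ((d - c) ^ (-(1/2) : ℝ))
    have hev : (fun x => mB x c d) =ᶠ[nhds t]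
        (fun x => (d - c) ^ (-(1/2) : ℝ) * F0 ((d - c) / (d - x))) := by
      filter_upwards [Iio_mem_nhds htc] with x hx
      exact mB_eq hx h2
    have := hcomp.congr_of_eventuallyEq hev
    convert (show HasDerivAt (fun x => mB x c d) _ t from this) using 1
    rw [hvb]
    ring
  have Db : deriv (fun x => mB x c d) b = vb b := (hDb b h1).deriv
  have hev_der : deriv (fun x => mB x c d) =ᶠ[nhds b] vb := by
    filter_upwards [Iio_mem_nhds h1] with t ht
    exact (hDb t ht).deriv
  have hin_b : HasDerivAt (fun x : ℝ => (d - c) / (d - x))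
      ((0 * (d - b) - (d - c) * (0 - 1)) / (d - b) ^ 2) b :=
    (hasDerivAt_const b (d - c)).div
      ((hasDerivAt_const b d).sub (hasDerivAt_id b)) (sub_ne_zero.2 hbd.ne')
  have hcomp1 : HasDerivAt (fun x : ℝ => F1 ((d - c) / (d - x)))
      (F2 ((d - c)/(d - b)) * ((0 * (d - b) - (d - c) * (0 - 1)) / (d - b) ^ 2)) b :=
    (dF1 hχ).comp b hin_b
  have hg : HasDerivAt (fun x : ℝ => (d - c) / (d - x) ^ 2)
      ((0 * (d - b) ^ 2 - (d - c) * (↑2 * (d - b) ^ 1 * (0 - 1))) / ((d - b) ^ 2) ^ 2) b := by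
    have := (hasDerivAt_const b (d - c)).div
      (((hasDerivAt_const b d).sub (hasDerivAt_id b)).pow 2)
      (pow_ne_zero 2 (show d - id b ≠ 0 from hdb.ne'))
    exact this
  have hvb' := (hcomp1.mul hg).const_mul ((d - c) ^ (-(1/2) : ℝ))
  have Db2 : deriv (deriv (fun x => mB x c d)) b
      = (d - c) ^ (-(1/2) : ℝ)
        * ((F2 ((d - c)/(d - b)) * ((0 * (d - b) - (d - c) * (0 - 1)) / (d - b) ^ 2))
            * ((d - c) / (d - b) ^ 2)
          + F1 ((d - c)/(d - b))
            * ((0 * (d - b) ^ 2 - (d - c) * (↑2 * (d - b) ^ 1 * (0 - 1))) / ((d - b) ^ 2) ^ 2)) := by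
    rw [Filter.EventuallyEq.deriv_eq hev_der]
    exact hvb'.deriv
  -- assemble
  have hODE := ode hχ
  have hne1 : (d - c)/(d - b) ≠ 0 := hχ.1.ne'
  have hne2 : 1 - (d - c)/(d - b) ≠ 0 := by
    have := hχ.2
    intro hcon
    rw [sub_eq_zero] at hcon
    exact absurd hcon.symm this.ne
  have hA2 : F2 ((d - c)/(d - b))
      = ((5/4 * ((d - c)/(d - b)) - 3/2) * F1 ((d - c)/(d - b))
          - 3/8 * F0 ((d - c)/(d - b))) / (((d - c)/(d - b)) * (1 - (d - c)/(d - b))) := by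
    rw [eq_div_iff (mul_ne_zero hne1 hne2)]
    linear_combination hODE
  rw [mB_eq h1 h2, Dc, Dd, Db, Db2, hvb, rP, hA2]
  have hbc : b - c ≠ 0 := sub_ne_zero.2 h1.ne
  have hdbc : d - b - (d - c) ≠ 0 := by linarith
  field_simp
  ring

end SLEaux

/-- On Ω = {b < c < d}, the function m(b,c,d) is twice continuously
differentiable and satisfies
−(1/(d−b)²)·m + (2/(c−b))·∂m/∂c + (2/(d−b))·∂m/∂d − (8/3)·(1/(b−c))·∂m/∂b + (8/3)·∂²m/∂b² = 0. -/
theorem stmt9 :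
    ContDiffOn ℝ 2 (fun p : ℝ × ℝ × ℝ => mB p.1 p.2.1 p.2.2)
      {p : ℝ × ℝ × ℝ | p.1 < p.2.1 ∧ p.2.1 < p.2.2} ∧
    ∀ b c d : ℝ, b < c → c < d →
      -(1 / (d - b) ^ 2) * mB b c d
        + (2 / (c - b)) * deriv (fun t => mB b t d) c
        + (2 / (d - b)) * deriv (fun t => mB b c t) d
        - (8 / 3) * (1 / (b - c)) * deriv (fun t => mB t c d) b
        + (8 / 3) * deriv (deriv (fun t => mB t c d)) b = 0 :=
  ⟨mB_contDiffOn, fun b c d h1 h2 => pde b c d h1 h2⟩
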